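/- Let ℓ ∈ ℕ and m ∈ ℤ with |m| ≤ ℓ. Define h̃_{a,b} := √((a+b)(a+b+1)) for integers a,b, and the sign factors š_m := sign(m)·(1−δ_{m,0})·√(1+δ_{m,1}) and ŝ_m := sign(m)·(1−δ_{m,−1})·√(1+δ_{m,0}), where sign(m) = 1 for m ≥ 0 and −1 for m < 0, and δ is the Kronecker delta. Then for all y ∈ (−1,1) and φ ∈ ℝ: √(1−y²)·cos(φ)·Y_{ℓ,m}(y,φ) = (1/(2(2ℓ+1)))·( š_m·( h̃_{ℓ+1,−m}·Y_{ℓ+1,m−1}(y,φ) − h̃_{ℓ−1,m}·Y_{ℓ−1,m−1}(y,φ) ) − ŝ_m·( h̃_{ℓ+1,m}·Y_{ℓ+1,m+1}(y,φ) − h̃_{ℓ−1,−m}·Y_{ℓ−1,m+1}(y,φ) ) ), where Y_{ℓ',m'} := 0 whenever |m'| > ℓ' or ℓ' < 0. (Here h̃_{ℓ−1,m} = √((ℓ+m−1)(ℓ+m)) and h̃_{ℓ+1,m} = √((ℓ+m+1)(ℓ+m+2)).) -/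

import Mathlib

open Polynomial

/-- Associated Legendre function
`P̂_ℓ^m(y) = (−1)^m·(1−y²)^{m/2}·(1/(2^ℓ·ℓ!))·(d/dy)^{ℓ+m}[(y²−1)^ℓ]`. -/
noncomputable def hatP (l m : ℕ) (y : ℝ) : ℝ :=
  (-1 : ℝ) ^ m * (1 - y ^ 2) ^ ((m : ℝ) / 2) * (1 / ((2 : ℝ) ^ l * (Nat.factorial l : ℝ))) *
    Polynomial.eval y
      ((fun q : Polynomial ℝ => Polynomial.derivative q)^[l + m] ((X ^ 2 - 1) ^ l))

/-- Normalized associated Legendre function `Č_ℓ^m = √((ℓ−m)!/(ℓ+m)!)·P̂_ℓ^m`. -/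
noncomputable def checkP (l m : ℕ) (y : ℝ) : ℝ :=
  Real.sqrt ((Nat.factorial (l - m) : ℝ) / (Nat.factorial (l + m) : ℝ)) * hatP l m y

/-- Real (tesseral) spherical harmonics `Y_{ℓ,m}(y,φ)`, defined to be `0` when
`ℓ < 0` or `|m| > ℓ`. -/
noncomputable def Ysh (l m : ℤ) (y φ : ℝ) : ℝ :=
  if 0 ≤ l ∧ |m| ≤ l then
    if m < 0 then Real.sqrt 2 * checkP l.toNat m.natAbs y * Real.sin ((m.natAbs : ℝ) * φ)
    else if m = 0 then checkP l.toNat 0 y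
    else Real.sqrt 2 * checkP l.toNat m.natAbs y * Real.cos ((m : ℝ) * φ)
  else 0

/-- `h̃_{a,b} = √((a+b)(a+b+1))`. -/
noncomputable def htC (a b : ℤ) : ℝ := Real.sqrt (((a + b) * (a + b + 1) : ℤ) : ℝ)

/-- `sign(m) = 1` for `m ≥ 0`, `−1` for `m < 0`. -/
noncomputable def sgn (m : ℤ) : ℝ := if 0 ≤ m then 1 else -1

/-- `š_m = sign(m)·(1−δ_{m,0})·√(1+δ_{m,1})`. -/
noncomputable def sCheck (m : ℤ) : ℝ :=
  sgn m * (1 - if m = 0 then 1 else 0) * Real.sqrt (1 + if m = 1 then 1 else 0)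

/-- `ŝ_m = sign(m)·(1−δ_{m,−1})·√(1+δ_{m,0})`. -/
noncomputable def sHat (m : ℤ) : ℝ :=
  sgn m * (1 - if m = -1 then 1 else 0) * Real.sqrt (1 + if m = 0 then 1 else 0)


noncomputable def Q (l : ℕ) : Polynomial ℝ := (X^2 - 1)^l

lemma Q_succ (l : ℕ) : Q (l+1) = (X^2-1) * Q l := by rw [Q, Q, pow_succ]; ring

lemma derivQ (l : ℕ) : derivative (Q (l+1)) = C (2*(l:ℝ)+2) * (X * Q l) := by
  rw [Q, Q, derivative_pow]
  simp [derivative_X_pow, C_add, C_mul, C_eq_natCast, map_ofNat]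
  ring

lemma natDegree_Q (l : ℕ) : (Q l).natDegree = 2*l := by
  rw [Q, natDegree_pow]
  have : ((X:Polynomial ℝ)^2 - 1).natDegree = 2 := by
    have := natDegree_X_pow_sub_C (R := ℝ) (n := 2) (r := (1:ℝ))
    simpa using this
  rw [this]; ring

lemma iterQ_zero {l k : ℕ} (h : 2*l < k) : derivative^[k] (Q l) = 0 :=
  Polynomial.iterate_derivative_eq_zero (by rw [natDegree_Q]; exact h)

lemma iterD_X_mul (p : Polynomial ℝ) : ∀ k, derivative^[k+1] (X * p)
    = X * derivative^[k+1] p + C ((k:ℝ)+1) * derivative^[k] p := by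
  intro k
  induction k with
  | zero => simp [derivative_mul]; ring
  | succ k ih =>
    rw [Function.iterate_succ_apply' derivative (k+1) (X*p), ih,
      Function.iterate_succ_apply' derivative (k+1) p]
    simp [derivative_mul, ← Function.iterate_succ_apply, Function.iterate_succ_apply', C_add, C_mul, C_eq_natCast, map_ofNat]
    ring

lemma iterD_X2_mul (p : Polynomial ℝ) : ∀ k, derivative^[k+2] ((X^2-1) * p)
    = (X^2-1) * derivative^[k+2] p + C (2*(k:ℝ)+4) * (X * derivative^[k+1] p)
      + C (((k:ℝ)+2)*((k:ℝ)+1)) * derivative^[k] p := by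
  intro k
  induction k with
  | zero =>
    show derivative (derivative ((X^2-1) * p)) = _
    simp [derivative_mul, derivative_X_pow, C_add, C_mul, C_eq_natCast, map_ofNat]
    ring
  | succ k ih =>
    rw [Function.iterate_succ_apply' derivative (k+2) ((X^2-1)*p), ih,
      Function.iterate_succ_apply' derivative (k+2) p,
      Function.iterate_succ_apply' derivative (k+1) p]
    simp [derivative_mul, derivative_X_pow, ← Function.iterate_succ_apply, Function.iterate_succ_apply', C_add, C_mul, C_eq_natCast, map_ofNat]
    push_cast
    ring

lemma iterD_add (k : ℕ) (p q : Polynomial ℝ) :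
    derivative^[k] (p + q) = derivative^[k] p + derivative^[k] q := by
  induction k with
  | zero => rfl
  | succ k ih => rw [Function.iterate_succ_apply' derivative k (p+q), ih,
      Function.iterate_succ_apply' derivative k p, Function.iterate_succ_apply' derivative k q,
      derivative_add]

/-- second derivative of Q (l+1), base case of P1 -/
lemma D2Q (l : ℕ) : derivative (derivative (Q (l+1)))
    = C ((2*(l:ℝ)+2)*(2*(l:ℝ)+1)) * Q l + C (4*(l:ℝ)*((l:ℝ)+1)) * Q (l-1) := by
  rw [derivQ l]
  rw [derivative_C_mul, derivative_mul, derivative_X]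
  cases l with
  | zero => simp [Q]
  | succ L =>
    rw [derivQ L, Q_succ L]
    simp only [Nat.add_sub_cancel]
    push_cast
    ring_nf
    simp [C_add, C_mul, C_eq_natCast, map_ofNat]
    ring

lemma P1 (l k : ℕ) : derivative^[k+2] (Q (l+1))
    = C ((2*(l:ℝ)+2)*(2*(l:ℝ)+1)) * derivative^[k] (Q l)
      + C (4*(l:ℝ)*((l:ℝ)+1)) * derivative^[k] (Q (l-1)) := by
  rw [Function.iterate_add_apply derivative k 2 (Q (l+1))]
  rw [show (derivative^[2] (Q (l+1))) = derivative (derivative (Q (l+1))) from rfl, D2Q l]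
  rw [iterD_add, Polynomial.iterate_derivative_C_mul,
    Polynomial.iterate_derivative_C_mul]

noncomputable def g (l k : ℕ) (y : ℝ) : ℝ := (derivative^[k] (Q l)).eval y

lemma g_zero {l k : ℕ} (h : 2*l < k) (y : ℝ) : g l k y = 0 := by
  rw [g, iterQ_zero h, eval_zero]

lemma gP1 (l k : ℕ) (y : ℝ) : g (l+1) (k+2) y
    = (2*(l:ℝ)+2)*(2*(l:ℝ)+1) * g l k y + 4*(l:ℝ)*((l:ℝ)+1) * g (l-1) k y := by
  have h := congrArg (eval y) (P1 l k)
  simpa [g] using h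

lemma gC (l k : ℕ) (y : ℝ) : ((l:ℝ)-1-(k:ℝ)) * g (l+1) (k+2) y
    = ((l:ℝ)+1)*(y^2-1) * g l (k+2) y - ((l:ℝ)+1)*((k:ℝ)+1)*((k:ℝ)+2) * g l k y := by
  have hA := congrArg (eval y) (by rw [Q_succ l] : derivative^[k+2] (Q (l+1)) = derivative^[k+2] ((X^2-1) * Q l))
  rw [iterD_X2_mul (Q l) k] at hA
  have hB : derivative^[k+2] (Q (l+1)) = C (2*(l:ℝ)+2) * (X * derivative^[k+1] (Q l)
      + C ((k:ℝ)+1) * derivative^[k] (Q l)) := by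
    rw [show k + 2 = (k+1) + 1 by ring, Function.iterate_succ_apply derivative (k+1) (Q (l+1)),
      derivQ l, Polynomial.iterate_derivative_C_mul, iterD_X_mul (Q l) k]
  have hB' := congrArg (eval y) hB
  simp only [eval_mul, eval_add, eval_C, eval_X, eval_sub, eval_pow, eval_one] at hA hB'
  simp only [g]
  set a := (derivative^[k+2] (Q (l+1))).eval y
  set b := (derivative^[k+2] (Q l)).eval y
  set c := (derivative^[k+1] (Q l)).eval y
  set d := (derivative^[k] (Q l)).eval y
  linear_combination ((l:ℝ)+1) * hA - ((k:ℝ)+2) * hB'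

lemma gP2 (l k : ℕ) (y : ℝ) : 2*((l:ℝ)+1)*(2*(l:ℝ)+1)*(y^2-1) * g l (k+2) y
    = (2*(l:ℝ)-(k:ℝ)-1)*(2*(l:ℝ)-(k:ℝ)) * g (l+1) (k+2) y
      - 4*(l:ℝ)*((l:ℝ)+1)*((k:ℝ)+1)*((k:ℝ)+2) * g (l-1) k y := by
  linear_combination (-2*(2*(l:ℝ)+1)) * gC l k y - (((k:ℝ)+1)*((k:ℝ)+2)) * gP1 l k y

lemma iterate_fun_eq (k : ℕ) (p : Polynomial ℝ) :
    (fun q : Polynomial ℝ => Polynomial.derivative q)^[k] p = derivative^[k] p := rfl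

lemma hatP_eq (l m : ℕ) {y : ℝ} (hy : 0 ≤ 1 - y^2) :
    hatP l m y = (-1:ℝ)^m * (Real.sqrt (1-y^2))^m * ((2:ℝ)^l * (Nat.factorial l : ℝ))⁻¹
      * g l (l+m) y := by
  rw [hatP, iterate_fun_eq]
  have : (1 - y^2) ^ ((m:ℝ)/2) = (Real.sqrt (1-y^2))^m := by
    rw [Real.sqrt_eq_rpow, ← Real.rpow_natCast ((1-y^2) ^ ((1:ℝ)/2)) m, ← Real.rpow_mul hy]
    ring_nf
  rw [this, one_div, g, Q]

lemma hatP_vanish {l m : ℕ} (h : l < m) {y : ℝ} (hy : 0 ≤ 1 - y^2) : hatP l m y = 0 := by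
  rw [hatP_eq l m hy, g_zero (by omega), mul_zero]

lemma g00 (y : ℝ) : g 0 0 y = 1 := by simp [g, Q]

lemma hatN1 (l m : ℕ) {y : ℝ} (hy : 0 ≤ 1 - y^2) :
    hatP (l+1) (m+1) y - hatP (l-1) (m+1) y
      = -(2*(l:ℝ)+1) * Real.sqrt (1-y^2) * hatP l m y := by
  cases l with
  | zero =>
    simp only [Nat.zero_eq, Nat.cast_zero]
    rw [show (0:ℕ) - 1 = 0 from rfl, hatP_vanish (by omega : 0 < m+1) hy]
    cases m with
    | zero =>
      rw [hatP_eq 1 1 hy, hatP_eq 0 0 hy]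
      have key := gP1 0 0 y
      simp only [Nat.cast_zero] at key
      norm_num at key ⊢
      rw [key, g00]
      ring
    | succ m =>
      rw [hatP_eq 1 (m+2) hy, hatP_eq 0 (m+1) hy,
        g_zero (by omega : 2*1 < 1+(m+2)), g_zero (by omega : 2*0 < 0+(m+1))]
      ring
  | succ L =>
    rw [hatP_eq (L+1+1) (m+1) hy, hatP_eq (L+1-1) (m+1) hy, hatP_eq (L+1) m hy]
    have key := gP1 (L+1) (L+m+1) y
    rw [show (L+1)-1 = L from rfl] at key
    rw [show (L+1+1) + (m+1) = (L+m+1)+2 by omega, key,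
      show (L+1-1) + (m+1) = L+m+1 by omega,
      show (L+1) + m = L+m+1 by omega]
    have hf2 : ((Nat.factorial (L+1+1) : ℝ)) = (L+2) * (L+1) * (Nat.factorial L : ℝ) := by
      push_cast [Nat.factorial_succ]; ring
    have hf1 : ((Nat.factorial (L+1) : ℝ)) = (L+1) * (Nat.factorial L : ℝ) := by
      push_cast [Nat.factorial_succ]; ring
    have hfL : (Nat.factorial L : ℝ) ≠ 0 := Nat.cast_ne_zero.mpr (Nat.factorial_ne_zero L)
    have h2L : ((2:ℝ))^L ≠ 0 := by positivity
    rw [hf2, hf1]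
    rw [pow_succ ((2:ℝ)) (L+1), pow_succ ((2:ℝ)) L, pow_succ ((-1:ℝ)) m,
      pow_succ (Real.sqrt (1-y^2)) m]
    push_cast
    field_simp
    ring

lemma hatN2 (l m : ℕ) {y : ℝ} (hy : 0 ≤ 1 - y^2) :
    (2*(l:ℝ)+3) * Real.sqrt (1-y^2) * hatP (l+1) (m+1) y
      = ((l:ℝ)-(m:ℝ)+1)*((l:ℝ)-(m:ℝ)+2) * hatP (l+2) m y
        - ((l:ℝ)+(m:ℝ)+2)*((l:ℝ)+(m:ℝ)+1) * hatP l m y := by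
  rw [hatP_eq (l+1) (m+1) hy, hatP_eq (l+2) m hy, hatP_eq l m hy]
  have key := gP2 (l+1) (l+m) y
  rw [show (l+1)-1 = l from rfl, show (l+1)+1 = l+2 from rfl] at key
  push_cast at key
  rw [show (l+1) + (m+1) = (l+m)+2 by omega, show (l+2) + m = (l+m)+2 by omega]
  have hsq : (Real.sqrt (1-y^2))^2 = 1 - y^2 := Real.sq_sqrt hy
  have hf2 : ((Nat.factorial (l+2) : ℝ)) = ((l:ℝ)+2) * ((l:ℝ)+1) * (Nat.factorial l : ℝ) := by
    push_cast [Nat.factorial_succ]; ring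
  have hf1 : ((Nat.factorial (l+1) : ℝ)) = ((l:ℝ)+1) * (Nat.factorial l : ℝ) := by
    push_cast [Nat.factorial_succ]; ring
  have hfL : (Nat.factorial l : ℝ) ≠ 0 := Nat.cast_ne_zero.mpr (Nat.factorial_ne_zero l)
  have h2L : ((2:ℝ))^l ≠ 0 := by positivity
  have hl1 : ((l:ℝ)+1) ≠ 0 := by positivity
  have hl2 : ((l:ℝ)+2) ≠ 0 := by positivity
  rw [hf2, hf1, pow_succ ((2:ℝ)) (l+1), pow_succ ((2:ℝ)) l]
  clear hy
  linear_combination (norm := (field_simp; ring))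
    (((-1:ℝ)^m * (Real.sqrt (1-y^2))^m * (((2:ℝ)^l*2) * (((l:ℝ)+1) * (Nat.factorial l : ℝ)))⁻¹
       / (2*((l:ℝ)+2))) * key)
    + ((-(2*(l:ℝ)+3)) * (-1:ℝ)^m * (Real.sqrt (1-y^2))^m
        * (((2:ℝ)^l*2) * (((l:ℝ)+1) * (Nat.factorial l : ℝ)))⁻¹ * g (l+1) (l+m+2) y) * hsq

lemma checkP_vanish {l m : ℕ} (h : l < m) {y : ℝ} (hy : 0 ≤ 1 - y^2) : checkP l m y = 0 := by
  rw [checkP, hatP_vanish h hy, mul_zero]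

lemma sqrt_mul_sqrt_eq {a b c : ℝ} (ha : 0 ≤ a) (hc : 0 ≤ c) (h : a * b = c^2) :
    Real.sqrt a * Real.sqrt b = c := by
  rw [← Real.sqrt_mul ha, h, Real.sqrt_sq hc]

lemma fact_ne (n : ℕ) : ((Nat.factorial n : ℝ)) ≠ 0 := Nat.cast_ne_zero.mpr (Nat.factorial_ne_zero n)

lemma fact_pos (n : ℕ) : (0:ℝ) < (Nat.factorial n : ℝ) := by
  exact_mod_cast Nat.factorial_pos n

lemma cN2 (l m : ℕ) (hm : m ≤ l) {y : ℝ} (hy : 0 ≤ 1 - y^2) :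
    (2*(l:ℝ)+3) * Real.sqrt (1-y^2) * checkP (l+1) (m+1) y
      = Real.sqrt (((l:ℝ)-(m:ℝ)+1)*((l:ℝ)-(m:ℝ)+2)) * checkP (l+2) m y
        - Real.sqrt (((l:ℝ)+(m:ℝ)+1)*((l:ℝ)+(m:ℝ)+2)) * checkP l m y := by
  obtain ⟨j, rfl⟩ : ∃ j, l = m + j := ⟨l - m, by omega⟩
  have h := hatN2 (m+j) m hy
  simp only [checkP]
  rw [show m+j+1-(m+1) = j by omega, show m+j+1+(m+1) = 2*m+j+2 by omega,
    show m+j+2-m = j+2 by omega, show m+j+2+m = 2*m+j+2 by omega,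
    show m+j-m = j by omega, show m+j+m = 2*m+j by omega]
  rw [show ((↑(m+j):ℝ)-(m:ℝ)+1)*((↑(m+j):ℝ)-(m:ℝ)+2) = ((j:ℝ)+1)*((j:ℝ)+2) by push_cast; ring]
  have hEC : Real.sqrt (((j:ℝ)+1)*((j:ℝ)+2))
      * Real.sqrt ((Nat.factorial (j+2) : ℝ) / (Nat.factorial (2*m+j+2) : ℝ))
      = ((j:ℝ)+1)*((j:ℝ)+2) * Real.sqrt ((Nat.factorial j : ℝ) / (Nat.factorial (2*m+j+2) : ℝ)) := by
    apply sqrt_mul_sqrt_eq (by positivity) (by positivity)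
    rw [mul_pow, Real.sq_sqrt (by positivity)]
    have e2 : ((Nat.factorial (j+2) : ℝ)) = ((j:ℝ)+1)*((j:ℝ)+2) * (Nat.factorial j : ℝ) := by
      push_cast [Nat.factorial_succ]; ring
    rw [e2]
    field_simp
  have hED : Real.sqrt (((↑(m+j):ℝ)+(m:ℝ)+1)*((↑(m+j):ℝ)+(m:ℝ)+2))
      * Real.sqrt ((Nat.factorial j : ℝ) / (Nat.factorial (2*m+j) : ℝ))
      = (2*(m:ℝ)+(j:ℝ)+1)*(2*(m:ℝ)+(j:ℝ)+2)
        * Real.sqrt ((Nat.factorial j : ℝ) / (Nat.factorial (2*m+j+2) : ℝ)) := by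
    apply sqrt_mul_sqrt_eq (by positivity) (by positivity)
    rw [mul_pow, Real.sq_sqrt (by positivity)]
    have e2 : ((Nat.factorial (2*m+j+2) : ℝ))
        = (2*(m:ℝ)+(j:ℝ)+1)*(2*(m:ℝ)+(j:ℝ)+2) * (Nat.factorial (2*m+j) : ℝ) := by
      push_cast [Nat.factorial_succ]; ring
    rw [e2]
    have := fact_ne (2*m+j)
    have := fact_ne (2*m+j+2)
    field_simp
    push_cast
    ring
  push_cast at h hEC hED ⊢
  linear_combination (Real.sqrt ((Nat.factorial j : ℝ) / (Nat.factorial (2*m+j+2) : ℝ))) * h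
    - (hatP (m+j+2) m y) * hEC + (hatP (m+j) m y) * hED

lemma cN1 (l m : ℕ) (hm : m ≤ l) {y : ℝ} (hy : 0 ≤ 1 - y^2) :
    (2*(l:ℝ)+1) * Real.sqrt (1-y^2) * checkP l m y
      = Real.sqrt (((l:ℝ)-(m:ℝ))*((l:ℝ)-(m:ℝ)-1)) * checkP (l-1) (m+1) y
        - Real.sqrt (((l:ℝ)+(m:ℝ)+1)*((l:ℝ)+(m:ℝ)+2)) * checkP (l+1) (m+1) y := by
  obtain ⟨j, rfl⟩ : ∃ j, l = m + j := ⟨l - m, by omega⟩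
  have h := hatN1 (m+j) m hy
  simp only [checkP]
  rw [show m+j-m = j by omega, show m+j+m = 2*m+j by omega,
    show m+j+1-(m+1) = j by omega, show m+j+1+(m+1) = 2*m+j+2 by omega]
  have hEB : Real.sqrt (((↑(m+j):ℝ)+(m:ℝ)+1)*((↑(m+j):ℝ)+(m:ℝ)+2))
      * Real.sqrt ((Nat.factorial j : ℝ) / (Nat.factorial (2*m+j+2) : ℝ))
      = Real.sqrt ((Nat.factorial j : ℝ) / (Nat.factorial (2*m+j) : ℝ)) := by
    apply sqrt_mul_sqrt_eq (by positivity) (by positivity)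
    rw [Real.sq_sqrt (by positivity)]
    have e2 : ((Nat.factorial (2*m+j+2) : ℝ))
        = (2*(m:ℝ)+(j:ℝ)+1)*(2*(m:ℝ)+(j:ℝ)+2) * (Nat.factorial (2*m+j) : ℝ) := by
      push_cast [Nat.factorial_succ]; ring
    rw [e2]
    have := fact_ne (2*m+j)
    have h1 : (2*(m:ℝ)+(j:ℝ)+1) ≠ 0 := by positivity
    have h2 : (2*(m:ℝ)+(j:ℝ)+2) ≠ 0 := by positivity
    field_simp
    push_cast
    ring
  match j with
  | 0 =>
    rw [show ((↑(m+0):ℝ)-(m:ℝ))*((↑(m+0):ℝ)-(m:ℝ)-1) = 0 by push_cast; ring, Real.sqrt_zero]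
    rw [hatP_vanish (show m+0-1 < m+1 by omega) hy] at h
    push_cast at h hEB ⊢
    linear_combination (Real.sqrt ((Nat.factorial 0 : ℝ) / (Nat.factorial (2*m+0) : ℝ))) * h
      + (hatP (m+0+1) (m+1) y) * hEB
  | 1 =>
    rw [show ((↑(m+1):ℝ)-(m:ℝ))*((↑(m+1):ℝ)-(m:ℝ)-1) = 0 by push_cast; ring, Real.sqrt_zero]
    rw [hatP_vanish (show m+1-1 < m+1 by omega) hy] at h
    push_cast at h hEB ⊢
    linear_combination (Real.sqrt ((Nat.factorial 1 : ℝ) / (Nat.factorial (2*m+1) : ℝ))) * h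
      + (hatP (m+1+1) (m+1) y) * hEB
  | (j'+2) =>
    rw [show m+(j'+2)-1-(m+1) = j' by omega, show m+(j'+2)-1+(m+1) = 2*m+(j'+2) by omega]
    have hEA : Real.sqrt (((↑(m+(j'+2)):ℝ)-(m:ℝ))*((↑(m+(j'+2)):ℝ)-(m:ℝ)-1))
        * Real.sqrt ((Nat.factorial j' : ℝ) / (Nat.factorial (2*m+(j'+2)) : ℝ))
        = Real.sqrt ((Nat.factorial (j'+2) : ℝ) / (Nat.factorial (2*m+(j'+2)) : ℝ)) := by
      rw [show ((↑(m+(j'+2)):ℝ)-(m:ℝ))*((↑(m+(j'+2)):ℝ)-(m:ℝ)-1)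
        = ((j':ℝ)+2)*((j':ℝ)+1) by push_cast; ring]
      apply sqrt_mul_sqrt_eq (by positivity) (by positivity)
      rw [Real.sq_sqrt (by positivity)]
      have e2 : ((Nat.factorial (j'+2) : ℝ)) = ((j':ℝ)+1)*((j':ℝ)+2) * (Nat.factorial j' : ℝ) := by
        push_cast [Nat.factorial_succ]; ring
      rw [e2]
      have := fact_ne j'
      have := fact_ne (2*m+(j'+2))
      field_simp
      try ring
      try tauto
    push_cast at h hEA hEB ⊢
    linear_combination (Real.sqrt ((Nat.factorial (j'+2) : ℝ) / (Nat.factorial (2*m+(j'+2)) : ℝ))) * h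
      - (hatP (m+(j'+2)-1) (m+1) y) * hEA + (hatP (m+(j'+2)+1) (m+1) y) * hEB

lemma Ysh_zero (l : ℕ) (y φ : ℝ) : Ysh (l:ℤ) 0 y φ = checkP l 0 y := by
  rw [Ysh]
  simp

lemma Ysh_pos (l n : ℕ) (hn : 1 ≤ n) {y : ℝ} (hy : 0 ≤ 1 - y^2) (φ : ℝ) :
    Ysh (l:ℤ) (n:ℤ) y φ = Real.sqrt 2 * checkP l n y * Real.cos ((n:ℝ)*φ) := by
  rw [Ysh]
  rcases le_or_gt n l with h | h
  · rw [if_pos (by constructor <;> simp <;> omega)]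
    rw [if_neg (by omega), if_neg (by omega)]
    simp
  · rw [if_neg (by rw [abs_of_nonneg (by positivity : (0:ℤ) ≤ (n:ℤ))]; omega), checkP_vanish h hy]
    ring

lemma Ysh_neg (l n : ℕ) (hn : 1 ≤ n) {y : ℝ} (hy : 0 ≤ 1 - y^2) (φ : ℝ) :
    Ysh (l:ℤ) (-(n:ℤ)) y φ = Real.sqrt 2 * checkP l n y * Real.sin ((n:ℝ)*φ) := by
  rw [Ysh]
  rcases le_or_gt n l with h | h
  · rw [if_pos (by constructor <;> simp <;> omega)]
    rw [if_pos (by omega)]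
    simp
  · rw [if_neg (by rw [abs_neg, abs_of_nonneg (by positivity : (0:ℤ) ≤ (n:ℤ))]; omega), checkP_vanish h hy]
    ring

lemma Ysh_negl (m : ℤ) (y φ : ℝ) : Ysh (-1) m y φ = 0 := by
  rw [Ysh, if_neg (by omega)]

set_option maxHeartbeats 2000000 in
theorem stmt17 (l : ℕ) (m : ℤ) (hm : |m| ≤ (l : ℤ)) :
    ∀ y ∈ Set.Ioo (-1 : ℝ) 1, ∀ φ : ℝ,
      Real.sqrt (1 - y ^ 2) * Real.cos φ * Ysh l m y φ
        = (1 / (2 * (2 * (l : ℝ) + 1))) *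
            (sCheck m * (htC ((l : ℤ) + 1) (-m) * Ysh ((l : ℤ) + 1) (m - 1) y φ
                          - htC ((l : ℤ) - 1) m * Ysh ((l : ℤ) - 1) (m - 1) y φ)
              - sHat m * (htC ((l : ℤ) + 1) m * Ysh ((l : ℤ) + 1) (m + 1) y φ
                          - htC ((l : ℤ) - 1) (-m) * Ysh ((l : ℤ) - 1) (m + 1) y φ)) := by
  rintro y ⟨hy1, hy2⟩ φ
  have hY : (0:ℝ) ≤ 1 - y^2 := by nlinarith
  rcases lt_trichotomy m 0 with hneg | rfl | hpos
  · -- m < 0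
    obtain ⟨n, rfl⟩ : ∃ n : ℕ, m = -(n:ℤ) := ⟨m.natAbs, by omega⟩
    have hn1 : 1 ≤ n := by omega
    have hnl : n ≤ l := by
      rw [abs_neg, abs_of_nonneg (by positivity)] at hm; exact_mod_cast hm
    obtain ⟨L, rfl⟩ : ∃ L, l = L+1 := ⟨l-1, by omega⟩
    have hsC : sCheck (-(n:ℤ)) = -1 := by
      rw [sCheck, sgn, if_neg (by omega), if_neg (by omega), if_neg (by omega)]
      norm_num
    match n, hn1, hnl with
    | 1, _, hnl =>
      have hsH : sHat (-((1:ℕ):ℤ)) = 0 := by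
        rw [sHat]; norm_num
      rw [hsC, hsH]
      rw [show (-((1:ℕ):ℤ))-1 = -((2:ℕ):ℤ) by norm_num,
        show ((L+1:ℕ):ℤ)+1 = ((L+2:ℕ):ℤ) by push_cast; ring,
        show ((L+1:ℕ):ℤ)-1 = ((L:ℕ):ℤ) by push_cast; ring]
      rw [Ysh_neg (L+1) 1 (by omega) hY φ, Ysh_neg (L+2) 2 (by omega) hY φ,
        Ysh_neg L 2 (by omega) hY φ]
      have e1 := cN1 (L+1) 1 (by omega) hY
      have tS : Real.sin (((2:ℕ):ℝ)*φ) = 2 * Real.sin φ * Real.cos φ := by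
        push_cast; rw [two_mul, Real.sin_add]; ring
      have hne : (2*(L:ℝ)+3) ≠ 0 := by positivity
      simp only [htC]
      push_cast at e1 tS ⊢
      ring_nf at e1 tS ⊢
      linear_combination (norm := (field_simp; ring))
        (Real.sqrt 2 * Real.sin (2*φ)/(2*(2*(L:ℝ)+3))) * e1
        + (-(Real.sqrt 2/2) * Real.sqrt (1-y^2) * checkP (L+1) 1 y) * tS
    | (k+2), _, hnl =>
      have hsH : sHat (-((k+2:ℕ):ℤ)) = -1 := by
        rw [sHat, sgn, if_neg (by omega), if_neg (by omega), if_neg (by omega)]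
        norm_num
      rw [hsC, hsH]
      rw [show (-((k+2:ℕ):ℤ))-1 = -((k+3:ℕ):ℤ) by push_cast; ring,
        show (-((k+2:ℕ):ℤ))+1 = -((k+1:ℕ):ℤ) by push_cast; ring,
        show ((L+1:ℕ):ℤ)+1 = ((L+2:ℕ):ℤ) by push_cast; ring,
        show ((L+1:ℕ):ℤ)-1 = ((L:ℕ):ℤ) by push_cast; ring]
      rw [Ysh_neg (L+1) (k+2) (by omega) hY φ, Ysh_neg (L+2) (k+3) (by omega) hY φ,
        Ysh_neg L (k+3) (by omega) hY φ, Ysh_neg (L+2) (k+1) (by omega) hY φ,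
        Ysh_neg L (k+1) (by omega) hY φ]
      have e2 := cN2 L (k+1) (by omega) hY
      have e1 := cN1 (L+1) (k+2) (by omega) hY
      have tS : Real.sin (((k+1:ℕ):ℝ)*φ) + Real.sin (((k+3:ℕ):ℝ)*φ)
          = 2 * Real.sin (((k+2:ℕ):ℝ)*φ) * Real.cos φ := by
        push_cast
        rw [show ((k:ℝ)+1)*φ = ((k:ℝ)+2)*φ - φ by ring,
          show ((k:ℝ)+3)*φ = ((k:ℝ)+2)*φ + φ by ring, Real.sin_sub, Real.sin_add]
        ring
      have hne : (2*(L:ℝ)+3) ≠ 0 := by positivity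
      simp only [htC]
      push_cast at e1 e2 tS ⊢
      ring_nf at e1 e2 tS ⊢
      linear_combination (norm := (field_simp; ring))
        (Real.sqrt 2 * Real.sin (((k:ℝ)+3)*φ)/(2*(2*(L:ℝ)+3))) * e1
        + (Real.sqrt 2 * Real.sin (((k:ℝ)+1)*φ)/(2*(2*(L:ℝ)+3))) * e2
        + (-(Real.sqrt 2/2) * Real.sqrt (1-y^2) * checkP (L+1) (k+2) y) * tS
  · -- m = 0
    have hsC : sCheck 0 = 0 := by simp [sCheck]
    have hsH : sHat 0 = Real.sqrt 2 := by norm_num [sHat, sgn]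
    rw [hsC, hsH, Ysh_zero l y φ]
    cases l with
    | zero =>
      rw [show ((0:ℕ):ℤ)+1 = ((1:ℕ):ℤ) by norm_num, show ((0:ℕ):ℤ)-1 = (-1:ℤ) by norm_num]
      rw [show (0:ℤ)+1 = ((1:ℕ):ℤ) by norm_num]
      rw [Ysh_pos 1 1 le_rfl hY φ, Ysh_negl]
      have e1 := cN1 0 0 le_rfl hY
      simp only [htC]
      norm_num at e1 ⊢
      have h2 : Real.sqrt 2 * Real.sqrt 2 = 2 := Real.mul_self_sqrt (by norm_num)
      linear_combination (Real.cos φ) * e1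
        + (Real.sqrt 2 * checkP 1 1 y * Real.cos φ / 2) * h2
    | succ L =>
      rw [show ((L+1:ℕ):ℤ)+1 = ((L+2:ℕ):ℤ) by push_cast; ring,
        show ((L+1:ℕ):ℤ)-1 = ((L:ℕ):ℤ) by push_cast; ring,
        show (0:ℤ)+1 = ((1:ℕ):ℤ) by norm_num]
      rw [Ysh_pos (L+2) 1 le_rfl hY φ, Ysh_pos L 1 le_rfl hY φ]
      have e1 := cN1 (L+1) 0 (by omega) hY
      have h2 : Real.sqrt 2 * Real.sqrt 2 = 2 := Real.mul_self_sqrt (by norm_num)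
      have hne : (2*(L:ℝ)+3) ≠ 0 := by positivity
      simp only [htC]
      push_cast at e1 ⊢
      ring_nf at e1 ⊢
      linear_combination (norm := (field_simp; ring))
        (Real.sqrt 2 * Real.sqrt 2 * Real.cos φ / (2*(2*(L:ℝ)+3))) * e1
        + (-(Real.sqrt (1-y^2) * Real.cos φ * checkP (L+1) 0 y / 2)) * h2
  · -- m > 0
    lift m to ℕ using hpos.le with n hn
    have hn1 : 1 ≤ n := by exact_mod_cast hpos
    have hnl : n ≤ l := by
      rw [abs_of_nonneg (by positivity)] at hm; exact_mod_cast hm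
    obtain ⟨L, rfl⟩ : ∃ L, l = L+1 := ⟨l-1, by omega⟩
    have hsH : sHat (n:ℤ) = 1 := by
      rw [sHat, sgn, if_pos (by positivity), if_neg (by omega), if_neg (by omega)]
      norm_num
    have h2 : Real.sqrt 2 * Real.sqrt 2 = 2 := Real.mul_self_sqrt (by norm_num)
    match n, hn1, hnl with
    | 1, _, hnl =>
      have hsC : sCheck ((1:ℕ):ℤ) = Real.sqrt 2 := by
        rw [sCheck, sgn]; norm_num
      rw [hsC, hsH]
      rw [show ((L+1:ℕ):ℤ)+1 = ((L+2:ℕ):ℤ) by push_cast; ring,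
        show ((L+1:ℕ):ℤ)-1 = ((L:ℕ):ℤ) by push_cast; ring,
        show (((1:ℕ):ℤ))-1 = (0:ℤ) by norm_num,
        show (((1:ℕ):ℤ))+1 = ((2:ℕ):ℤ) by norm_num]
      rw [Ysh_pos (L+1) 1 (by omega) hY φ, Ysh_zero (L+2) y φ, Ysh_zero L y φ,
        Ysh_pos (L+2) 2 (by omega) hY φ, Ysh_pos L 2 (by omega) hY φ]
      have e2 := cN2 L 0 (by omega) hY
      have e1 := cN1 (L+1) 1 (by omega) hY
      have tB : Real.cos (((2:ℕ):ℝ)*φ) = 2 * Real.cos φ ^ 2 - 1 := by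
        push_cast; rw [two_mul, Real.cos_add]
        have := Real.sin_sq_add_cos_sq φ
        nlinarith [this]
      have hne : (2*(L:ℝ)+3) ≠ 0 := by positivity
      simp only [htC]
      push_cast at e1 e2 tB ⊢
      ring_nf at e1 e2 tB ⊢
      linear_combination (norm := (field_simp; ring))
        (Real.sqrt 2/(2*(2*(L:ℝ)+3))) * e2
        + (Real.sqrt 2 * Real.cos (2*φ)/(2*(2*(L:ℝ)+3))) * e1
        + (-(Real.sqrt 2/2) * Real.sqrt (1-y^2) * checkP (L+1) 1 y) * tB
    | (k+2), _, hnl =>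
      have hsC : sCheck ((k+2:ℕ):ℤ) = 1 := by
        rw [sCheck, sgn, if_pos (by positivity), if_neg (by omega), if_neg (by omega)]
        norm_num
      rw [hsC, hsH]
      rw [show ((L+1:ℕ):ℤ)+1 = ((L+2:ℕ):ℤ) by push_cast; ring,
        show ((L+1:ℕ):ℤ)-1 = ((L:ℕ):ℤ) by push_cast; ring,
        show (((k+2:ℕ):ℤ))-1 = ((k+1:ℕ):ℤ) by push_cast; ring,
        show (((k+2:ℕ):ℤ))+1 = ((k+3:ℕ):ℤ) by push_cast; ring]
      rw [Ysh_pos (L+1) (k+2) (by omega) hY φ, Ysh_pos (L+2) (k+1) (by omega) hY φ,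
        Ysh_pos L (k+1) (by omega) hY φ, Ysh_pos (L+2) (k+3) (by omega) hY φ,
        Ysh_pos L (k+3) (by omega) hY φ]
      have e2 := cN2 L (k+1) (by omega) hY
      have e1 := cN1 (L+1) (k+2) (by omega) hY
      have tA : Real.cos (((k+1:ℕ):ℝ)*φ) + Real.cos (((k+3:ℕ):ℝ)*φ)
          = 2 * Real.cos (((k+2:ℕ):ℝ)*φ) * Real.cos φ := by
        push_cast
        rw [show ((k:ℝ)+1)*φ = ((k:ℝ)+2)*φ - φ by ring,
          show ((k:ℝ)+3)*φ = ((k:ℝ)+2)*φ + φ by ring, Real.cos_sub, Real.cos_add]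
        ring
      have hne : (2*(L:ℝ)+3) ≠ 0 := by positivity
      simp only [htC]
      push_cast at e1 e2 tA ⊢
      ring_nf at e1 e2 tA ⊢
      linear_combination (norm := (field_simp; ring))
        (Real.sqrt 2 * Real.cos (((k:ℝ)+1)*φ)/(2*(2*(L:ℝ)+3))) * e2
        + (Real.sqrt 2 * Real.cos (((k:ℝ)+3)*φ)/(2*(2*(L:ℝ)+3))) * e1
        + (-(Real.sqrt 2/2) * Real.sqrt (1-y^2) * checkP (L+1) (k+2) y) * tA
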